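/- Let φ be twice continuously differentiable on an open interval containing [x₀ − ω, x₀ + ω] ⊂ (−1,1), with φ'(x₀) = 0 and −L ≤ φ''(x) ≤ −1 on this interval for some L ≥ 1. Then for all N ≥ 1, ∫_{x₀−ω}^{x₀+ω} exp(Nφ(x)) dx ≥ exp(Nφ(x₀)) · (1/√N) ∫_{|y| ≤ ω√N} exp(−L y²) dy, and ∫_{[−1,1] \ [x₀−ω, x₀+ω]} exp(Nφ(x)) dx ≤ exp(Nφ(x₀)) · (2/√N) ∫_{|y| ≥ ω√N} exp(−y²/2) dy, provided φ(x) ≤ φ(x₀) − (x−x₀)²/2 holds for all x ∈ [−1,1]. -/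

import Mathlib

open MeasureTheory Real

set_option maxHeartbeats 1600000 in
theorem laplace_method_estimates (φ : ℝ → ℝ) (x₀ ω L : ℝ)
    (hω : 0 < ω) (hL : 1 ≤ L)
    (hsub : Set.Icc (x₀ - ω) (x₀ + ω) ⊆ Set.Ioo (-1 : ℝ) 1)
    (hφ : ContDiffOn ℝ 2 φ (Set.Ioo (-1 : ℝ) 1))
    (hcrit : deriv φ x₀ = 0)
    (hcurv : ∀ x ∈ Set.Icc (x₀ - ω) (x₀ + ω),
      -L ≤ deriv (deriv φ) x ∧ deriv (deriv φ) x ≤ -1)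
    (hglob : ∀ x ∈ Set.Icc (-1 : ℝ) 1, φ x ≤ φ x₀ - (x - x₀) ^ 2 / 2) :
    ∀ N : ℕ, 1 ≤ N →
      (Real.exp ((N : ℝ) * φ x₀) * ((1 / Real.sqrt N)
          * ∫ y in Set.Icc (-(ω * Real.sqrt N)) (ω * Real.sqrt N),
              Real.exp (-L * y ^ 2))
        ≤ ∫ x in Set.Icc (x₀ - ω) (x₀ + ω), Real.exp ((N : ℝ) * φ x)) ∧
      ((∫ x in Set.Icc (-1 : ℝ) 1 \ Set.Icc (x₀ - ω) (x₀ + ω),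
            Real.exp ((N : ℝ) * φ x))
        ≤ Real.exp ((N : ℝ) * φ x₀) * ((2 / Real.sqrt N)
            * ∫ y in {y : ℝ | ω * Real.sqrt N ≤ |y|}, Real.exp (-y ^ 2 / 2))) := by
  have hIopen : IsOpen (Set.Ioo (-1 : ℝ) 1) := isOpen_Ioo
  set K := Set.Icc (x₀ - ω) (x₀ + ω) with hK
  have hx₀K : x₀ ∈ K := by constructor <;> simp <;> linarith
  have hx₀I : x₀ ∈ Set.Ioo (-1 : ℝ) 1 := hsub hx₀K
  -- differentiability facts
  have hdiff : DifferentiableOn ℝ φ (Set.Ioo (-1 : ℝ) 1) :=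
    hφ.differentiableOn (by norm_num)
  have hφ' : ContDiffOn ℝ 1 (deriv φ) (Set.Ioo (-1 : ℝ) 1) :=
    hφ.deriv_of_isOpen hIopen (by norm_num)
  have hdiff' : DifferentiableOn ℝ (deriv φ) (Set.Ioo (-1 : ℝ) 1) :=
    hφ'.differentiableOn one_ne_zero
  have hDA : ∀ x ∈ Set.Ioo (-1 : ℝ) 1, HasDerivAt φ (deriv φ x) x := fun x hx =>
    ((hdiff x hx).differentiableAt (hIopen.mem_nhds hx)).hasDerivAt
  have hDA' : ∀ x ∈ Set.Ioo (-1 : ℝ) 1, HasDerivAt (deriv φ) (deriv (deriv φ) x) x := fun x hx =>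
    ((hdiff' x hx).differentiableAt (hIopen.mem_nhds hx)).hasDerivAt
  -- |φ'| ≤ L |x - x₀| on K
  have hL0 : (0:ℝ) < L := lt_of_lt_of_le one_pos hL
  have hderiv_bound : ∀ x ∈ K, |deriv φ x| ≤ L * |x - x₀| := by
    intro x hxK
    have := Convex.norm_image_sub_le_of_norm_hasDerivWithin_le
      (f := deriv φ) (f' := deriv (deriv φ)) (s := K) (C := L)
      (fun z hz => ((hDA' z (hsub hz)).hasDerivWithinAt))
      (fun z hz => by
        rcases hcurv z hz with ⟨h1, h2⟩
        rw [Real.norm_eq_abs, abs_le]; exact ⟨by linarith, by linarith⟩)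
      (convex_Icc _ _) hx₀K hxK
    simpa [hcrit, Real.norm_eq_abs] using this
  -- φ x ≥ φ x₀ - L (x-x₀)^2 on K
  have hlow : ∀ x ∈ K, φ x₀ - L * (x - x₀) ^ 2 ≤ φ x := by
    intro x hxK
    have huK : Set.uIcc x x₀ ⊆ K := Set.uIcc_subset_Icc hxK hx₀K
    have key := Convex.norm_image_sub_le_of_norm_hasDerivWithin_le
      (f := φ) (f' := deriv φ) (s := Set.uIcc x x₀) (C := L * |x - x₀|)
      (fun z hz => (hDA z (hsub (huK hz))).hasDerivWithinAt)
      (fun z hz => by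
        have h1 := hderiv_bound z (huK hz)
        have h2 : |z - x₀| ≤ |x - x₀| := by
          rcases Set.mem_uIcc.1 hz with ⟨ha, hb⟩ | ⟨ha, hb⟩
          · rw [abs_sub_comm z x₀, abs_sub_comm x x₀,
              abs_of_nonneg (by linarith), abs_of_nonneg (by linarith)]
            linarith
          · rw [abs_of_nonneg (by linarith), abs_of_nonneg (by linarith)]
            linarith
        calc ‖deriv φ z‖ ≤ L * |z - x₀| := h1
          _ ≤ L * |x - x₀| := by nlinarith)
      (convex_uIcc _ _) (Set.right_mem_uIcc) (Set.left_mem_uIcc)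
    have : |φ x - φ x₀| ≤ L * |x - x₀| * |x - x₀| := by
      simpa [Real.norm_eq_abs] using key
    have h3 : |x - x₀| * |x - x₀| = (x - x₀) ^ 2 := by
      rw [← abs_mul, ← sq, abs_sq]
    nlinarith [neg_abs_le (φ x - φ x₀)]
  intro N hN
  have hN0 : (0:ℝ) < N := by exact_mod_cast Nat.lt_of_lt_of_le Nat.zero_lt_one hN
  set sN := Real.sqrt N with hsNdef
  have hsN : 0 < sN := Real.sqrt_pos.2 hN0
  have hsq : sN ^ 2 = N := Real.sq_sqrt hN0.le
  set c := sN⁻¹ with hc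
  have hc0 : 0 < c := inv_pos.2 hsN
  have hcs : c * sN = 1 := inv_mul_cancel₀ hsN.ne'
  have hc2 : (N : ℝ) * c ^ 2 = 1 := by
    rw [hc, ← hsq]; field_simp
  have himg : ∀ s : Set ℝ, MeasurableSet s → ∀ g : ℝ → ℝ,
      ∫ x in (fun y => x₀ + c * y) '' s, g x = ∫ y in s, c * g (x₀ + c * y) := by
    intro s hs g
    have := integral_image_eq_integral_abs_deriv_smul (f := fun y => x₀ + c * y)
      (f' := fun _ => c) hs
      (fun y _ => by
        simpa using (((hasDerivAt_id y).const_mul c).const_add x₀).hasDerivWithinAt)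
      (fun a _ b _ hab => by
        have hab' : x₀ + c * a = x₀ + c * b := hab
        exact mul_left_cancel₀ hc0.ne' (by linarith)) g
    simpa [abs_of_pos hc0, smul_eq_mul] using this
  constructor
  · -- lower bound
    have himgK : (fun y => x₀ + c * y) '' Set.Icc (-(ω * sN)) (ω * sN) = K := by
      ext x
      constructor
      · rintro ⟨y, ⟨hy1, hy2⟩, rfl⟩
        have he : c * (ω * sN) = ω := by
          rw [hc]; field_simp
        constructor
        · show x₀ - ω ≤ x₀ + c * y
          nlinarith [mul_le_mul_of_nonneg_left hy1 hc0.le, he]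
        · show x₀ + c * y ≤ x₀ + ω
          nlinarith [mul_le_mul_of_nonneg_left hy2 hc0.le, he]
      · rintro ⟨hx1, hx2⟩
        refine ⟨sN * (x - x₀),
          ⟨by nlinarith [mul_le_mul_of_nonneg_left (show -ω ≤ x - x₀ by linarith) hsN.le],
           by nlinarith [mul_le_mul_of_nonneg_left (show x - x₀ ≤ ω by linarith) hsN.le]⟩, ?_⟩
        rw [hc]
        field_simp
        ring
    have cov : ∫ x in K, Real.exp ((N:ℝ) * φ x₀) * Real.exp (-((N:ℝ) * L) * (x - x₀) ^ 2)
        = Real.exp ((N:ℝ) * φ x₀) * ((1 / sN)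
          * ∫ y in Set.Icc (-(ω * sN)) (ω * sN), Real.exp (-L * y ^ 2)) := by
      rw [← himgK, himg _ measurableSet_Icc]
      have : ∀ y : ℝ, c * (Real.exp ((N:ℝ) * φ x₀)
            * Real.exp (-((N:ℝ) * L) * (x₀ + c * y - x₀) ^ 2))
          = (Real.exp ((N:ℝ) * φ x₀) * c) * Real.exp (-L * y ^ 2) := by
        intro y
        have : -((N:ℝ) * L) * (x₀ + c * y - x₀) ^ 2 = -L * y ^ 2 := by
          have : (x₀ + c * y - x₀) ^ 2 = c ^ 2 * y ^ 2 := by ring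
          rw [this]; linear_combination (-L * y ^ 2) * hc2
        rw [this]; ring
      simp_rw [this]
      rw [MeasureTheory.integral_const_mul, one_div]
      ring
    have hcont : ContinuousOn (fun x => Real.exp ((N:ℝ) * φ x)) K :=
      Real.continuous_exp.comp_continuousOn (continuousOn_const.mul (hφ.continuousOn.mono hsub))
    have hmono : ∫ x in K, Real.exp ((N:ℝ) * φ x₀) * Real.exp (-((N:ℝ) * L) * (x - x₀) ^ 2)
        ≤ ∫ x in K, Real.exp ((N:ℝ) * φ x) := by
      apply setIntegral_mono_on
      · exact Continuous.integrableOn_Icc (by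
          exact continuous_const.mul (Real.continuous_exp.comp
            (continuous_const.mul ((continuous_id.sub continuous_const).pow 2))))
      · exact hcont.integrableOn_Icc
      · exact measurableSet_Icc
      · intro x hx
        rw [← Real.exp_add, Real.exp_le_exp]
        have h := hlow x hx
        nlinarith [mul_le_mul_of_nonneg_left h hN0.le]
    calc Real.exp ((N : ℝ) * φ x₀) * ((1 / sN)
          * ∫ y in Set.Icc (-(ω * sN)) (ω * sN), Real.exp (-L * y ^ 2))
        = ∫ x in K, Real.exp ((N:ℝ) * φ x₀) * Real.exp (-((N:ℝ) * L) * (x - x₀) ^ 2) := cov.symm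
      _ ≤ _ := hmono
  · -- upper bound
    set S := Set.Icc (-1 : ℝ) 1 \ K with hS
    set T := {x : ℝ | ω ≤ |x - x₀|} with hT
    set s₂ := {y : ℝ | ω * sN ≤ |y|} with hs₂def
    have hSmeas : MeasurableSet S := measurableSet_Icc.diff measurableSet_Icc
    have hs₂meas : MeasurableSet s₂ :=
      measurableSet_le measurable_const continuous_abs.measurable
    set b := (N : ℝ) / 2 with hb
    have hb0 : 0 < b := by positivity
    set g := fun x : ℝ => Real.exp (-b * (x - x₀) ^ 2) with hg
    have hint_g : Integrable g := (integrable_exp_neg_mul_sq hb0).comp_sub_right x₀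
    have hST : S ⊆ T := by
      rintro x ⟨hx1, hx2⟩
      have hcases : x < x₀ - ω ∨ x₀ + ω < x := by
        by_contra h
        push_neg at h
        exact hx2 ⟨h.1, h.2⟩
      show ω ≤ |x - x₀|
      rcases hcases with h | h
      · rw [abs_sub_comm, abs_of_pos (by linarith)]; linarith
      · rw [abs_of_pos (by linarith)]; linarith
    -- measurability of the integrand on S
    have hcontI : ContinuousOn (fun x => Real.exp ((N:ℝ) * φ x)) (Set.Ioo (-1:ℝ) 1) :=
      Real.continuous_exp.comp_continuousOn (continuousOn_const.mul hφ.continuousOn)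
    have hSS' : S =ᵐ[volume] ((S ∩ Set.Ioo (-1:ℝ) 1 : Set ℝ) : Set ℝ) := by
      apply (MeasureTheory.ae_eq_set).2
      constructor
      · apply measure_mono_null (t := ({-1, 1} : Set ℝ))
        · rintro x ⟨hxS, hxnot⟩
          have hxIcc := hxS.1
          rcases hxIcc with ⟨ha, hb'⟩
          by_contra hne
          simp only [Set.mem_insert_iff, Set.mem_singleton_iff, not_or] at hne
          exact (fun hh => hxnot ⟨hxS, hh⟩) ⟨lt_of_le_of_ne ha (Ne.symm hne.1), lt_of_le_of_ne hb' hne.2⟩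
        · exact ((Set.finite_singleton (1:ℝ)).insert (-1)).measure_zero volume
      · have hempty : (S ∩ Set.Ioo (-1:ℝ) 1 : Set ℝ) \ S = ∅ :=
          Set.diff_eq_empty.2 Set.inter_subset_left
        rw [hempty]
        simp
    have hmeasS : AEStronglyMeasurable (fun x => Real.exp ((N:ℝ) * φ x)) (volume.restrict S) := by
      rw [Measure.restrict_congr_set hSS']
      exact (hcontI.aestronglyMeasurable measurableSet_Ioo).mono_measure
        (Measure.restrict_mono Set.inter_subset_right le_rfl)
    have hptS : ∀ x ∈ S, Real.exp ((N:ℝ) * φ x) ≤ Real.exp ((N:ℝ) * φ x₀) * g x := by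
      intro x hxS
      rw [hg, ← Real.exp_add, Real.exp_le_exp, hb]
      have h := hglob x hxS.1
      nlinarith [mul_le_mul_of_nonneg_left h hN0.le]
    have hint_bound : IntegrableOn (fun x => Real.exp ((N:ℝ) * φ x₀) * g x) S :=
      (hint_g.const_mul _).integrableOn
    have hint_f : IntegrableOn (fun x => Real.exp ((N:ℝ) * φ x)) S := by
      apply Integrable.mono' hint_bound hmeasS
      rw [ae_restrict_iff' hSmeas]
      filter_upwards with x hx
      rw [Real.norm_eq_abs, abs_of_pos (Real.exp_pos _)]
      exact hptS x hx
    have step1 : (∫ x in S, Real.exp ((N:ℝ) * φ x))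
        ≤ ∫ x in S, Real.exp ((N:ℝ) * φ x₀) * g x :=
      setIntegral_mono_on hint_f hint_bound hSmeas hptS
    have step2 : (∫ x in S, Real.exp ((N:ℝ) * φ x₀) * g x)
        = Real.exp ((N:ℝ) * φ x₀) * ∫ x in S, g x := MeasureTheory.integral_const_mul _ _
    have step3 : (∫ x in S, g x) ≤ ∫ x in T, g x := by
      apply setIntegral_mono_set hint_g.integrableOn
      · filter_upwards with x using (Real.exp_pos _).le
      · exact HasSubset.Subset.eventuallyLE hST
    -- change of variables for T
    have himgT : (fun y => x₀ + c * y) '' s₂ = T := by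
      ext x
      constructor
      · rintro ⟨y, hy, rfl⟩
        show ω ≤ |x₀ + c * y - x₀|
        have habs : |x₀ + c * y - x₀| = c * |y| := by
          rw [show x₀ + c * y - x₀ = c * y by ring, abs_mul, abs_of_pos hc0]
        rw [habs]
        have hy' : ω * sN ≤ |y| := hy
        have he : c * (ω * sN) = ω := by
          rw [hc]; field_simp
        nlinarith [mul_le_mul_of_nonneg_left hy' hc0.le, he]
      · intro hx
        have hx' : ω ≤ |x - x₀| := hx
        refine ⟨sN * (x - x₀), ?_, by rw [hc]; field_simp; ring⟩
        show ω * sN ≤ |sN * (x - x₀)|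
        rw [abs_mul, abs_of_pos hsN]
        nlinarith [mul_le_mul_of_nonneg_left hx' hsN.le]
    have cov2 : (∫ x in T, g x) = c * ∫ y in s₂, Real.exp (-y ^ 2 / 2) := by
      rw [← himgT, himg _ hs₂meas]
      have : ∀ y : ℝ, c * g (x₀ + c * y) = c * Real.exp (-y ^ 2 / 2) := by
        intro y
        have h1 : -b * (x₀ + c * y - x₀) ^ 2 = -y ^ 2 / 2 := by
          rw [hb]
          linear_combination (-(y ^ 2) / 2) * hc2
        simp only [hg]
        rw [h1]
      simp_rw [this]
      rw [MeasureTheory.integral_const_mul]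
    have hnonneg : 0 ≤ ∫ y in s₂, Real.exp (-y ^ 2 / 2) :=
      setIntegral_nonneg hs₂meas (fun y _ => (Real.exp_pos _).le)
    have hfinal : c * (∫ y in s₂, Real.exp (-y ^ 2 / 2))
        ≤ (2 / sN) * ∫ y in s₂, Real.exp (-y ^ 2 / 2) := by
      apply mul_le_mul_of_nonneg_right _ hnonneg
      rw [hc, div_eq_mul_inv]
      nlinarith [inv_pos.2 hsN]
    calc (∫ x in S, Real.exp ((N:ℝ) * φ x))
        ≤ ∫ x in S, Real.exp ((N:ℝ) * φ x₀) * g x := step1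
      _ = Real.exp ((N:ℝ) * φ x₀) * ∫ x in S, g x := step2
      _ ≤ Real.exp ((N:ℝ) * φ x₀) * ∫ x in T, g x := by
          exact mul_le_mul_of_nonneg_left step3 (Real.exp_pos _).le
      _ = Real.exp ((N:ℝ) * φ x₀) * (c * ∫ y in s₂, Real.exp (-y ^ 2 / 2)) := by rw [cov2]
      _ ≤ Real.exp ((N:ℝ) * φ x₀) * ((2 / sN) * ∫ y in s₂, Real.exp (-y ^ 2 / 2)) :=
          mul_le_mul_of_nonneg_left hfinal (Real.exp_pos _).le
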